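/- Let B_1, B_2, B_3 be independent {0,1}-valued random variables with P(B_i = 1) = p_i and p_1 + p_2 + p_3 = 1. Then P(B_1 + B_2 + B_3 = 1) ≥ 4/9. -/

import Mathlib

open MeasureTheory ProbabilityTheory
open scoped ENNReal

/-- If `B₁, B₂, B₃` are independent `{0,1}`-valued random variables
with success probabilities summing to `1`, then `P(B₁ + B₂ + B₃ = 1) ≥ 4/9`. -/
theorem stmt14 {Ω : Type*} [MeasurableSpace Ω] (P : Measure Ω) [IsProbabilityMeasure P]
    (B : Fin 3 → Ω → ℕ) (hmeas : ∀ i, Measurable (B i))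
    (h01 : ∀ i ω, B i ω = 0 ∨ B i ω = 1)
    (hindep : iIndepFun B P)
    (p : Fin 3 → ℝ≥0∞) (hp : ∀ i, P {ω | B i ω = 1} = p i)
    (hsum : p 0 + p 1 + p 2 = 1) :
    4 / 9 ≤ P {ω | B 0 ω + B 1 ω + B 2 ω = 1} := by
  have key : ∀ s : Fin 3 → Set ℕ, P (B 0 ⁻¹' s 0 ∩ (B 1 ⁻¹' s 1 ∩ B 2 ⁻¹' s 2)) =
      P (B 0 ⁻¹' s 0) * P (B 1 ⁻¹' s 1) * P (B 2 ⁻¹' s 2) := by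
    intro s
    have h := hindep.measure_inter_preimage_eq_mul Finset.univ
      (sets := s) (fun i _ => MeasurableSet.of_discrete)
    have hset : (⋂ i ∈ Finset.univ, B i ⁻¹' s i) =
        B 0 ⁻¹' s 0 ∩ (B 1 ⁻¹' s 1 ∩ B 2 ⁻¹' s 2) := by
      ext ω
      simp [Fin.forall_fin_succ, Set.mem_iInter]
    rw [hset, Fin.prod_univ_three] at h
    rw [h]
  set q : Fin 3 → ℝ≥0∞ := fun i => P (B i ⁻¹' {0}) with hq
  have hp' : ∀ i, P (B i ⁻¹' {1}) = p i := fun i => hp i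
  have hpq : ∀ i, p i + q i = 1 := by
    intro i
    rw [← hp' i, hq]
    rw [← measure_union (by
        simp only [Set.disjoint_left]
        intro ω h1 h0
        simp only [Set.mem_preimage, Set.mem_singleton_iff] at h1 h0
        omega)
      ((hmeas i) (MeasurableSet.of_discrete))]
    have : B i ⁻¹' {1} ∪ B i ⁻¹' {0} = Set.univ := by
      ext ω
      simp only [Set.mem_union, Set.mem_preimage, Set.mem_singleton_iff, Set.mem_univ, iff_true]
      rcases h01 i ω with h | h <;> simp [h]
    rw [this, measure_univ]
  have hdecomp : {ω | B 0 ω + B 1 ω + B 2 ω = 1} =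
      (B 0 ⁻¹' {1} ∩ (B 1 ⁻¹' {0} ∩ B 2 ⁻¹' {0})) ∪
      ((B 0 ⁻¹' {0} ∩ (B 1 ⁻¹' {1} ∩ B 2 ⁻¹' {0})) ∪
       (B 0 ⁻¹' {0} ∩ (B 1 ⁻¹' {0} ∩ B 2 ⁻¹' {1}))) := by
    ext ω
    simp only [Set.mem_setOf_eq, Set.mem_union, Set.mem_inter_iff, Set.mem_preimage,
      Set.mem_singleton_iff]
    rcases h01 0 ω with h0 | h0 <;> rcases h01 1 ω with h1 | h1 <;>
      rcases h01 2 ω with h2 | h2 <;> simp [h0, h1, h2]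
  have hE0 := key (fun j => if j = 0 then {1} else {0})
  have hE1 := key (fun j => if j = 1 then {1} else {0})
  have hE2 := key (fun j => if j = 2 then {1} else {0})
  simp only [show ((2:Fin 3) = 0) = False from by simp, show ((2:Fin 3) = 1) = False from by simp,
    show ((0:Fin 3) = 2) = False from by simp, show ((1:Fin 3) = 0) = False from by simp,
    show ((0:Fin 3) = 1) = False from by simp, show ((1:Fin 3) = 2) = False from by simp,
    show ((0:Fin 3) = 0) = True from by simp, show ((1:Fin 3) = 1) = True from by simp,
    show ((2:Fin 3) = 2) = True from by simp, if_true, if_false] at hE0 hE1 hE2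
  have hmS : ∀ (s : Set ℕ) i, MeasurableSet (B i ⁻¹' s) :=
    fun s i => (hmeas i) MeasurableSet.of_discrete
  have hdisj1 : Disjoint (B 0 ⁻¹' {1} ∩ (B 1 ⁻¹' {0} ∩ B 2 ⁻¹' {0}))
      ((B 0 ⁻¹' {0} ∩ (B 1 ⁻¹' {1} ∩ B 2 ⁻¹' {0})) ∪
       (B 0 ⁻¹' {0} ∩ (B 1 ⁻¹' {0} ∩ B 2 ⁻¹' {1}))) := by
    simp only [Set.disjoint_left]
    intro ω h1 h2
    simp only [Set.mem_union, Set.mem_inter_iff, Set.mem_preimage,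
      Set.mem_singleton_iff] at h1 h2
    omega
  have hdisj2 : Disjoint (B 0 ⁻¹' {0} ∩ (B 1 ⁻¹' {1} ∩ B 2 ⁻¹' {0}))
      (B 0 ⁻¹' {0} ∩ (B 1 ⁻¹' {0} ∩ B 2 ⁻¹' {1})) := by
    simp only [Set.disjoint_left]
    intro ω h1 h2
    simp only [Set.mem_inter_iff, Set.mem_preimage, Set.mem_singleton_iff] at h1 h2
    omega
  have hEq : P ((B 0 ⁻¹' {1} ∩ (B 1 ⁻¹' {0} ∩ B 2 ⁻¹' {0})) ∪
      ((B 0 ⁻¹' {0} ∩ (B 1 ⁻¹' {1} ∩ B 2 ⁻¹' {0})) ∪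
       (B 0 ⁻¹' {0} ∩ (B 1 ⁻¹' {0} ∩ B 2 ⁻¹' {1})))) =
      p 0 * (q 1 * q 2) + (q 0 * (p 1 * q 2) + q 0 * (q 1 * p 2)) := by
    rw [measure_union hdisj1 (((hmS _ 0).inter ((hmS _ 1).inter (hmS _ 2))).union
      ((hmS _ 0).inter ((hmS _ 1).inter (hmS _ 2)))),
      measure_union hdisj2 ((hmS _ 0).inter ((hmS _ 1).inter (hmS _ 2))),
      hE0, hE1, hE2, hp' 0, hp' 1, hp' 2]
    ring
  have hpt : ∀ i, p i ≠ ⊤ := fun i => hp i ▸ measure_ne_top P _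
  have hqt : ∀ i, q i ≠ ⊤ := fun i => measure_ne_top P _
  rw [hdecomp]
  refine (ENNReal.toReal_le_toReal (ENNReal.div_lt_top (by norm_num) (by norm_num)).ne (measure_ne_top P _)).mp ?_
  rw [hEq, ENNReal.toReal_add (ENNReal.mul_ne_top (hpt 0) (ENNReal.mul_ne_top (hqt 1) (hqt 2)))
      (ENNReal.add_ne_top.mpr ⟨ENNReal.mul_ne_top (hqt 0) (ENNReal.mul_ne_top (hpt 1) (hqt 2)),
        ENNReal.mul_ne_top (hqt 0) (ENNReal.mul_ne_top (hqt 1) (hpt 2))⟩),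
    ENNReal.toReal_add (ENNReal.mul_ne_top (hqt 0) (ENNReal.mul_ne_top (hpt 1) (hqt 2)))
      (ENNReal.mul_ne_top (hqt 0) (ENNReal.mul_ne_top (hqt 1) (hpt 2)))]
  simp only [ENNReal.toReal_mul]
  have habR : ∀ i, (p i).toReal + (q i).toReal = 1 := by
    intro i
    rw [← ENNReal.toReal_add (hpt i) (hqt i), hpq i, ENNReal.toReal_one]
  have hsumR : (p 0).toReal + (p 1).toReal + (p 2).toReal = 1 := by
    rw [← ENNReal.toReal_add (hpt 0) (hpt 1),
      ← ENNReal.toReal_add (ENNReal.add_ne_top.mpr ⟨hpt 0, hpt 1⟩) (hpt 2), hsum,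
      ENNReal.toReal_one]
  have h49 : ((4 : ℝ≥0∞) / 9).toReal = 4 / 9 := by
    rw [ENNReal.toReal_div]; norm_num
  rw [h49]
  set a := (p 0).toReal
  set b := (p 1).toReal
  set c := (p 2).toReal
  have hb0 : (q 0).toReal = 1 - a := by linarith [habR 0]
  have hb1 : (q 1).toReal = 1 - b := by linarith [habR 1]
  have hb2 : (q 2).toReal = 1 - c := by linarith [habR 2]
  have ha' : 0 ≤ a := ENNReal.toReal_nonneg
  have hb' : 0 ≤ b := ENNReal.toReal_nonneg
  have hc' : 0 ≤ c := ENNReal.toReal_nonneg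
  rw [hb0, hb1, hb2]
  nlinarith [sq_nonneg (a-b), sq_nonneg (b-c), sq_nonneg (a-c),
    mul_nonneg (mul_nonneg ha' hb') hc', mul_nonneg ha' hb', mul_nonneg hb' hc',
    mul_nonneg ha' hc', sq_nonneg (a-1/3), sq_nonneg (b-1/3), sq_nonneg (c-1/3)]
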